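/- Let m be a nonnegative integer. For all complex numbers a, b, and z, (1/π)·∫_ℂ e^{a·w + b·conj(w)}·q_m(conj(w)·z)·e^{conj(z)·w}·e^{-|w|^2} dA(w) = e^{b·(a + conj(z))}·q_m(z·(a + conj(z))). -/

import Mathlib

open Complex MeasureTheory
open scoped ComplexConjugate

/-- `q_m(u)`, the Taylor polynomial of `e^u` of order `m-1`. -/
noncomputable def qpoly (m : ℕ) (u : ℂ) : ℂ :=
  ∑ k ∈ Finset.range m, u ^ k / (k.factorial : ℂ)

open Metric
open scoped Real


noncomputable def Fk (k : ℕ) (α β : ℂ) (w : ℂ) : ℂ :=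
  (conj w) ^ k * Complex.exp (α * w + β * conj w - (‖w‖ : ℂ) ^ 2)

lemma norm_Fk (k : ℕ) (α β w : ℂ) :
    ‖Fk k α β w‖ = ‖w‖ ^ k * Real.exp ((α * w + β * conj w).re - ‖w‖ ^ 2) := by
  rw [Fk, norm_mul, norm_pow, RCLike.norm_conj]
  rw [show ‖Complex.exp (α * w + β * conj w - (‖w‖ : ℂ) ^ 2)‖
      = Real.exp ((α * w + β * conj w - (‖w‖ : ℂ) ^ 2).re) from Complex.norm_exp _]
  congr 2
  simp [sub_re, ← ofReal_pow]

lemma norm_Fk_le (k : ℕ) (α β w : ℂ) {D : ℝ} (hD : ‖β‖ ≤ D) :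
    ‖Fk k α β w‖ ≤ ‖w‖ ^ k * Real.exp ((‖α‖ + D) * ‖w‖ - ‖w‖ ^ 2) := by
  rw [norm_Fk]
  have h : (α * w + β * conj w).re ≤ (‖α‖ + D) * ‖w‖ := by
    calc (α * w + β * conj w).re ≤ ‖α * w + β * conj w‖ := Complex.re_le_norm _
    _ ≤ ‖α * w‖ + ‖β * conj w‖ := norm_add_le _ _
    _ = ‖α‖ * ‖w‖ + ‖β‖ * ‖w‖ := by simp [norm_mul]
    _ ≤ (‖α‖ + D) * ‖w‖ := by nlinarith [norm_nonneg w, norm_nonneg β]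
  exact mul_le_mul_of_nonneg_left (Real.exp_le_exp.2 (by linarith)) (by positivity)

lemma pow_mul_exp_le (k : ℕ) {C : ℝ} (hC : 0 ≤ C) {r : ℝ} (hr : 0 ≤ r) :
    r ^ k * Real.exp (C * r) ≤
      (k.factorial : ℝ) * Real.exp ((C + 1) ^ 2) * Real.exp (r ^ 2 / 2) := by
  have h1 : r ^ k ≤ (k.factorial : ℝ) * Real.exp r := by
    have h2 := Real.sum_le_exp_of_nonneg hr (k + 1)
    have h3 : r ^ k / (k.factorial : ℝ) ≤ Real.exp r :=
      le_trans (Finset.single_le_sum (f := fun i => r ^ i / (i.factorial : ℝ))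
        (fun i _ => by positivity) (Finset.self_mem_range_succ k)) h2
    have h4 : (0:ℝ) < (k.factorial : ℝ) := by positivity
    rw [div_le_iff₀ h4] at h3
    linarith [h3]
  calc r ^ k * Real.exp (C * r) ≤ ((k.factorial : ℝ) * Real.exp r) * Real.exp (C * r) := by
        have := Real.exp_pos (C * r); nlinarith
    _ = (k.factorial : ℝ) * Real.exp ((C + 1) * r) := by
        rw [mul_assoc, ← Real.exp_add]; ring_nf
    _ ≤ (k.factorial : ℝ) * Real.exp ((C + 1) ^ 2 + r ^ 2 / 2) := by
        refine mul_le_mul_of_nonneg_left (Real.exp_le_exp.2 ?_) (by positivity)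
        nlinarith [sq_nonneg ((C + 1) - r / 2)]
    _ = (k.factorial : ℝ) * Real.exp ((C + 1) ^ 2) * Real.exp (r ^ 2 / 2) := by
        rw [Real.exp_add]; ring

lemma integrable_rexp_neg_half_sq : Integrable (fun w : ℂ => Real.exp (-(1/2) * ‖w‖ ^ 2)) := by
  have h := (GaussianFourier.integrable_cexp_neg_mul_sq_norm_add (V := ℂ) (b := (1/2 : ℂ))
      (by norm_num) 0 (0 : ℂ)).norm
  refine h.congr (Filter.Eventually.of_forall fun w => ?_)
  simp only [Complex.norm_exp]
  congr 1
  simp [← Complex.ofReal_pow]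

lemma integrable_bound (k : ℕ) (C : ℝ) :
    Integrable (fun w : ℂ => ‖w‖ ^ k * Real.exp (C * ‖w‖ - ‖w‖ ^ 2)) := by
  set C' : ℝ := max C 0 with hC'
  have hC0 : 0 ≤ C' := le_max_right _ _
  set M : ℝ := (k.factorial : ℝ) * Real.exp ((C' + 1) ^ 2) with hM
  refine (integrable_rexp_neg_half_sq.const_mul M).mono' ?_ ?_
  · exact (Continuous.mul (by continuity) (by continuity)).aestronglyMeasurable
  · refine Filter.Eventually.of_forall fun w => ?_
    have h0 : 0 ≤ ‖w‖ ^ k * Real.exp (C * ‖w‖ - ‖w‖ ^ 2) := by positivity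
    rw [Real.norm_of_nonneg h0]
    have h1 : Real.exp (C * ‖w‖ - ‖w‖ ^ 2) ≤ Real.exp (C' * ‖w‖ - ‖w‖ ^ 2) := by
      refine Real.exp_le_exp.2 ?_
      have : C ≤ C' := le_max_left _ _
      nlinarith [norm_nonneg w]
    calc ‖w‖ ^ k * Real.exp (C * ‖w‖ - ‖w‖ ^ 2)
        ≤ ‖w‖ ^ k * Real.exp (C' * ‖w‖ - ‖w‖ ^ 2) := by
          exact mul_le_mul_of_nonneg_left h1 (by positivity)
      _ = (‖w‖ ^ k * Real.exp (C' * ‖w‖)) * Real.exp (-‖w‖ ^ 2) := by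
          rw [Real.exp_sub, Real.exp_neg]; field_simp
      _ ≤ (M * Real.exp (‖w‖ ^ 2 / 2)) * Real.exp (-‖w‖ ^ 2) := by
          exact mul_le_mul_of_nonneg_right
            (pow_mul_exp_le k hC0 (norm_nonneg w)) (Real.exp_pos _).le
      _ = M * Real.exp (-(1/2) * ‖w‖ ^ 2) := by
          rw [mul_assoc, ← Real.exp_add]; ring_nf

lemma integrable_Fk (k : ℕ) (α β : ℂ) : Integrable (Fk k α β) := by
  refine (integrable_bound k (‖α‖ + ‖β‖)).mono' ?_ ?_
  · refine Continuous.aestronglyMeasurable ?_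
    unfold Fk
    exact (Complex.continuous_conj.pow k).mul (Complex.continuous_exp.comp
      (((continuous_const.mul continuous_id).add
        (continuous_const.mul Complex.continuous_conj)).sub
        ((Complex.continuous_ofReal.comp continuous_norm).pow 2)))
  · exact Filter.Eventually.of_forall fun w => norm_Fk_le k α β w le_rfl

lemma hasDerivAt_Fk (k : ℕ) (α : ℂ) (w : ℂ) (β : ℂ) :
    HasDerivAt (fun β' => Fk k α β' w) (Fk (k + 1) α β w) β := by
  have h1 : HasDerivAt (fun β' : ℂ => α * w + β' * conj w - (‖w‖ : ℂ) ^ 2) (conj w) β := by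
    simpa using (((hasDerivAt_id β).mul_const (conj w)).const_add (α * w)).sub_const
      ((‖w‖ : ℂ) ^ 2)
  have h2 := (h1.cexp).const_mul ((conj w) ^ k)
  refine h2.congr_deriv ?_
  unfold Fk
  ring

lemma deriv_integral_Fk (k : ℕ) (α β : ℂ) :
    HasDerivAt (fun β' => ∫ w : ℂ, Fk k α β' w) (∫ w : ℂ, Fk (k + 1) α β w) β := by
  have key := hasDerivAt_integral_of_dominated_loc_of_deriv_le (F := fun β' w => Fk k α β' w)
    (F' := fun β' w => Fk (k + 1) α β' w) (x₀ := β)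
    (bound := fun w : ℂ => ‖w‖ ^ (k + 1) * Real.exp ((‖α‖ + (‖β‖ + 1)) * ‖w‖ - ‖w‖ ^ 2))
    (s := ball β 1) (ball_mem_nhds β one_pos)
    (Filter.Eventually.of_forall fun β' => (integrable_Fk k α β').aestronglyMeasurable)
    (integrable_Fk k α β)
    ((integrable_Fk (k + 1) α β).aestronglyMeasurable)
    (Filter.Eventually.of_forall fun w => fun β' hβ' => by
      refine norm_Fk_le (k + 1) α β' w ?_
      have := mem_ball_iff_norm.1 hβ'
      calc ‖β'‖ = ‖β + (β' - β)‖ := by ring_nf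
        _ ≤ ‖β‖ + ‖β' - β‖ := norm_add_le _ _
        _ ≤ ‖β‖ + 1 := by linarith)
    (integrable_bound (k + 1) _)
    (Filter.Eventually.of_forall fun w => fun β' _ => hasDerivAt_Fk k α w β')
  exact key.2

lemma integral_Fk_zero (α β : ℂ) :
    ∫ w : ℂ, Fk 0 α β w = (Real.pi : ℂ) * Complex.exp (α * β) := by
  have hmp := Complex.volume_preserving_equiv_real_prod.symm
  rw [← hmp.integral_comp (MeasurableEquiv.measurableEmbedding _)]
  have heq : ∀ p : ℝ × ℝ, Fk 0 α β (Complex.measurableEquivRealProd.symm p) =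
      Complex.exp ((-1 : ℂ) * p.1 ^ 2 + (α + β) * p.1 + 0) *
      Complex.exp ((-1 : ℂ) * p.2 ^ 2 + ((α - β) * I) * p.2 + 0) := by
    intro p
    rw [Complex.measurableEquivRealProd_symm_apply, Complex.mk_eq_add_mul_I]
    unfold Fk
    rw [pow_zero, one_mul, ← Complex.exp_add]
    congr 1
    have hconj : conj ((p.1 : ℂ) + (p.2 : ℂ) * I) = (p.1 : ℂ) - (p.2 : ℂ) * I := by
      simp [Complex.ext_iff]
    have hnorm : ((‖(p.1 : ℂ) + (p.2 : ℂ) * I‖ : ℂ)) ^ 2 = (p.1 : ℂ) ^ 2 + (p.2 : ℂ) ^ 2 := by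
      rw [← Complex.ofReal_pow]
      rw [show ‖(p.1 : ℂ) + (p.2 : ℂ) * I‖ ^ 2 = Complex.normSq ((p.1 : ℂ) + (p.2 : ℂ) * I) from by
        rw [Complex.sq_norm]]
      rw [Complex.normSq_add_mul_I]
      push_cast
      ring
    rw [hconj, hnorm]
    ring
  simp only [heq]
  rw [MeasureTheory.Measure.volume_eq_prod,
    MeasureTheory.integral_prod_mul (f := fun t : ℝ => Complex.exp ((-1 : ℂ) * t ^ 2 + (α + β) * t + 0))
      (g := fun t : ℝ => Complex.exp ((-1 : ℂ) * t ^ 2 + ((α - β) * I) * t + 0))]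
  rw [integral_cexp_quadratic (by norm_num : ((-1 : ℂ)).re < 0),
    integral_cexp_quadratic (by norm_num : ((-1 : ℂ)).re < 0)]
  have hpi : ((Real.pi : ℂ) / -(-1)) = (Real.pi : ℂ) := by norm_num
  rw [hpi]
  have hne : (Real.pi : ℂ) ≠ 0 := Complex.ofReal_ne_zero.2 Real.pi_ne_zero
  rw [show ((Real.pi : ℂ) ^ (1/2 : ℂ) * Complex.exp (0 - (α + β) ^ 2 / (4 * (-1)))) *
      ((Real.pi : ℂ) ^ (1/2 : ℂ) * Complex.exp (0 - ((α - β) * I) ^ 2 / (4 * (-1)))) =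
      ((Real.pi : ℂ) ^ (1/2 : ℂ) * (Real.pi : ℂ) ^ (1/2 : ℂ)) *
      (Complex.exp (0 - (α + β) ^ 2 / (4 * (-1))) *
       Complex.exp (0 - ((α - β) * I) ^ 2 / (4 * (-1)))) from by ring]
  rw [← Complex.cpow_add _ _ hne, ← Complex.exp_add]
  norm_num
  congr 1
  have : ((α - β) * I) ^ 2 = -(α - β) ^ 2 := by
    rw [mul_pow, Complex.I_sq]; ring
  rw [this]
  ring

lemma integral_Fk (k : ℕ) (α β : ℂ) :
    ∫ w : ℂ, Fk k α β w = (Real.pi : ℂ) * α ^ k * Complex.exp (α * β) := by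
  induction k generalizing β with
  | zero => simpa using integral_Fk_zero α β
  | succ k ih =>
    have h1 : HasDerivAt (fun β' => ∫ w : ℂ, Fk k α β' w)
        (∫ w : ℂ, Fk (k + 1) α β w) β := deriv_integral_Fk k α β
    have h2 : (fun β' => ∫ w : ℂ, Fk k α β' w) =
        fun β' => (Real.pi : ℂ) * α ^ k * Complex.exp (α * β') := funext fun β' => ih β'
    rw [h2] at h1
    have h3 : HasDerivAt (fun β' => (Real.pi : ℂ) * α ^ k * Complex.exp (α * β'))
        ((Real.pi : ℂ) * α ^ k * (Complex.exp (α * β) * α)) β := by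
      simpa using (((hasDerivAt_id β).const_mul α).cexp).const_mul ((Real.pi : ℂ) * α ^ k)
    rw [h1.unique h3]
    ring

theorem stmt_8 (m : ℕ) (a b z : ℂ) :
    (Real.pi : ℂ)⁻¹ * ∫ w : ℂ, Complex.exp (a * w + b * conj w) * qpoly m (conj w * z) *
        Complex.exp (conj z * w) * Complex.exp (-(‖w‖ : ℂ) ^ 2) =
      Complex.exp (b * (a + conj z)) * qpoly m (z * (a + conj z)) := by
  set α : ℂ := a + conj z with hα
  have heq : ∀ w : ℂ, Complex.exp (a * w + b * conj w) * qpoly m (conj w * z) *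
      Complex.exp (conj z * w) * Complex.exp (-(‖w‖ : ℂ) ^ 2) =
      ∑ k ∈ Finset.range m, (z ^ k / (k.factorial : ℂ)) * Fk k α b w := by
    intro w
    unfold qpoly
    rw [Finset.mul_sum, Finset.sum_mul, Finset.sum_mul]
    refine Finset.sum_congr rfl fun k _ => ?_
    unfold Fk
    rw [mul_pow, show Complex.exp (a * w + b * conj w) * ((conj w) ^ k * z ^ k / (k.factorial : ℂ)) *
        Complex.exp (conj z * w) * Complex.exp (-(‖w‖ : ℂ) ^ 2) =
        ((conj w) ^ k * z ^ k / (k.factorial : ℂ)) * (Complex.exp (a * w + b * conj w) *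
          Complex.exp (conj z * w) * Complex.exp (-(‖w‖ : ℂ) ^ 2)) from by ring,
      ← Complex.exp_add, ← Complex.exp_add,
      show a * w + b * conj w + conj z * w + -(‖w‖ : ℂ) ^ 2 =
        α * w + b * conj w - (‖w‖ : ℂ) ^ 2 from by rw [hα]; ring]
    ring
  rw [show (∫ w : ℂ, Complex.exp (a * w + b * conj w) * qpoly m (conj w * z) *
      Complex.exp (conj z * w) * Complex.exp (-(‖w‖ : ℂ) ^ 2)) =
      ∫ w : ℂ, ∑ k ∈ Finset.range m, (z ^ k / (k.factorial : ℂ)) * Fk k α b w from by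
    congr 1; exact funext heq]
  rw [MeasureTheory.integral_finset_sum _ fun k _ =>
    (integrable_Fk k α b).const_mul (z ^ k / (k.factorial : ℂ))]
  have hterm : ∀ k, (∫ w : ℂ, (z ^ k / (k.factorial : ℂ)) * Fk k α b w) =
      (z ^ k / (k.factorial : ℂ)) * ((Real.pi : ℂ) * α ^ k * Complex.exp (α * b)) := by
    intro k
    rw [MeasureTheory.integral_const_mul, integral_Fk]
  simp only [hterm]
  rw [Finset.mul_sum]
  unfold qpoly
  rw [Finset.mul_sum]
  refine Finset.sum_congr rfl fun k _ => ?_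
  have hne : (Real.pi : ℂ) ≠ 0 := Complex.ofReal_ne_zero.2 Real.pi_ne_zero
  rw [show (Real.pi : ℂ)⁻¹ * (z ^ k / (k.factorial : ℂ) *
      ((Real.pi : ℂ) * α ^ k * Complex.exp (α * b))) =
      ((Real.pi : ℂ)⁻¹ * (Real.pi : ℂ)) *
        (Complex.exp (α * b) * (z ^ k * α ^ k / (k.factorial : ℂ))) from by ring,
    inv_mul_cancel₀ hne, one_mul, mul_comm α b, mul_pow]
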